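/- The class of a q-Laguerre–Hahn form is a nonnegative integer. Equivalently: there is no normalized regular form u satisfying H_q(Φ u) + Ψ u + B(x^{-1} u (h_q u)) = 0 with Φ monic of degree at most 1, B of degree at most 1, and Ψ a nonzero constant (i.e. with s = max(deg Ψ − 1, max(deg Φ, deg B) − 2) = −1). -/

import Mathlib

open Polynomial

noncomputable section

namespace QLH

/-- A *form*: a linear functional on ℂ[x]. -/
abbrev PForm : Type := Polynomial ℂ →ₗ[ℂ] ℂ

private lemma divByMonic_add (d f g : Polynomial ℂ) (hd : d.Monic) :
    (f + g) /ₘ d = f /ₘ d + g /ₘ d := by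
  apply mul_left_cancel₀ hd.ne_zero
  have h1 : d * (f /ₘ d) = f - f %ₘ d := by
    rw [Polynomial.modByMonic_eq_sub_mul_div f d]; ring
  have h2 : d * (g /ₘ d) = g - g %ₘ d := by
    rw [Polynomial.modByMonic_eq_sub_mul_div g d]; ring
  have h3 : d * ((f + g) /ₘ d) = (f + g) - (f + g) %ₘ d := by
    rw [Polynomial.modByMonic_eq_sub_mul_div (f + g) d]; ring
  rw [mul_add, h1, h2, h3, Polynomial.add_modByMonic]
  ring

private lemma divByMonic_smul (d f : Polynomial ℂ) (a : ℂ) (hd : d.Monic) :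
    (a • f) /ₘ d = a • (f /ₘ d) := by
  apply mul_left_cancel₀ hd.ne_zero
  have h1 : d * (f /ₘ d) = f - f %ₘ d := by
    rw [Polynomial.modByMonic_eq_sub_mul_div f d]; ring
  have h3 : d * ((a • f) /ₘ d) = (a • f) - (a • f) %ₘ d := by
    rw [Polynomial.modByMonic_eq_sub_mul_div (a • f) d]; ring
  rw [h3, Polynomial.smul_modByMonic, mul_smul_comm, h1, smul_sub]

/-- `(h_a f)(x) = f (a x)`. -/
def hP (a : ℂ) : Polynomial ℂ →ₗ[ℂ] Polynomial ℂ :=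
  (Polynomial.aeval (Polynomial.C a * Polynomial.X : Polynomial ℂ)).toLinearMap

/-- `(θ_c f)(x) = (f(x) - f(c))/(x - c)`. -/
def thetaP (c : ℂ) : Polynomial ℂ →ₗ[ℂ] Polynomial ℂ where
  toFun f := (f - C (f.eval c)) /ₘ (X - C c)
  map_add' f g := by
    have h : f + g - C ((f + g).eval c)
        = (f - C (f.eval c)) + (g - C (g.eval c)) := by
      simp only [eval_add, C_add]; ring
    rw [h, divByMonic_add _ _ _ (monic_X_sub_C c)]
  map_smul' a f := by
    have h : a • f - C ((a • f).eval c) = a • (f - C (f.eval c)) := by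
      simp only [eval_smul, smul_eq_mul, smul_sub, Polynomial.smul_C]
    rw [h, divByMonic_smul _ _ _ (monic_X_sub_C c)]
    rfl

/-- `(H_q f)(x) = (f(qx) - f(x))/((q-1)x)`. -/
def HqP (q : ℂ) : Polynomial ℂ →ₗ[ℂ] Polynomial ℂ :=
  (q - 1)⁻¹ • (thetaP 0 ∘ₗ (hP q - LinearMap.id))

/-- `⟨h_a u, f⟩ = ⟨u, h_a f⟩`. -/
def hF (a : ℂ) (u : PForm) : PForm := u ∘ₗ hP a

/-- `⟨H_q u, f⟩ = -⟨u, H_q f⟩`. -/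
def HqF (q : ℂ) (u : PForm) : PForm := -(u ∘ₗ HqP q)

/-- `⟨g u, f⟩ = ⟨u, g f⟩`. -/
def mF (g : Polynomial ℂ) (u : PForm) : PForm := u ∘ₗ LinearMap.mulLeft ℂ g

/-- `⟨(x - c)⁻¹ u, f⟩ = ⟨u, θ_c f⟩`. -/
def divF (c : ℂ) (u : PForm) : PForm := u ∘ₗ thetaP c

/-- The Dirac form `δ_c`. -/
def deltaF (c : ℂ) : PForm := Polynomial.leval c

/-- Kernel used in the left product of a form by a polynomial. -/
def kern (u : PForm) (j : ℕ) : Polynomial ℂ :=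
  ∑ i ∈ Finset.range (j + 1), C (u (X ^ (j - i))) * X ^ i

/-- The left product `f ↦ u f`, `(uf)(x) = ⟨u_ζ, (x f(x) - ζ f(ζ))/(x - ζ)⟩`. -/
def lmul (u : PForm) : Polynomial ℂ →ₗ[ℂ] Polynomial ℂ where
  toFun f := f.sum fun j a => a • kern u j
  map_add' f g :=
    Polynomial.sum_add_index f g _ (fun i => zero_smul ℂ _) fun i b₁ b₂ => add_smul b₁ b₂ _
  map_smul' a f := by
    rw [Polynomial.sum_smul_index f a (fun j b => b • kern u j) fun i => zero_smul ℂ _]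
    simp only [Polynomial.sum_def, mul_smul, ← Finset.smul_sum]
    rfl

/-- The Cauchy product of two forms: `⟨uv, f⟩ = ⟨u, v f⟩`. -/
def cF (u v : PForm) : PForm := u ∘ₗ lmul v

/-- The q-difference equation `H_q(Φu) + Ψu + B(x⁻¹ u (h_q u)) = 0`. -/
def LHeq (q : ℂ) (u : PForm) (Φ Ψ B : Polynomial ℂ) : Prop :=
  HqF q (mF Φ u) + mF Ψ u + mF B (divF 0 (cF u (hF q u))) = 0

/-- A form is regular when it possesses a MOPS. -/
def IsRegular (u : PForm) : Prop :=
  ∃ P : ℕ → Polynomial ℂ, (∀ n, (P n).Monic) ∧ (∀ n, (P n).natDegree = n) ∧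
    (∀ n, u (P n * P n) ≠ 0) ∧ ∀ m n, m ≠ n → u (P m * P n) = 0

/-- A regular form is q-semiclassical when it satisfies `H_q(Φu) + Ψu = 0`, `Φ` monic. -/
def IsSemiclassical (q : ℂ) (u : PForm) : Prop :=
  IsRegular u ∧ ∃ Φ Ψ : Polynomial ℂ, Φ.Monic ∧ HqF q (mF Φ u) + mF Ψ u = 0

/-- A regular form is q-Laguerre–Hahn when it satisfies some equation `LHeq`. -/
def IsLaguerreHahn (q : ℂ) (u : PForm) : Prop :=
  IsRegular u ∧ ∃ Φ Ψ B : Polynomial ℂ, Φ.Monic ∧ LHeq q u Φ Ψ B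

/-- `u` is of class `s`: `s` is the minimum of `max (deg Ψ - 1) (max (deg Φ) (deg B) - 2)`
over all q-difference equations `LHeq q u Φ Ψ B` (`Φ` monic) satisfied by `u`. -/
def HasClass (q : ℂ) (u : PForm) (s : ℕ) : Prop :=
  (∃ Φ Ψ B : Polynomial ℂ, Φ.Monic ∧ LHeq q u Φ Ψ B ∧
      Φ.natDegree ≤ s + 2 ∧ B.natDegree ≤ s + 2 ∧ Ψ.natDegree ≤ s + 1) ∧
  ∀ t : ℕ, (∃ Φ Ψ B : Polynomial ℂ, Φ.Monic ∧ LHeq q u Φ Ψ B ∧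
      Φ.natDegree ≤ t + 2 ∧ B.natDegree ≤ t + 2 ∧ Ψ.natDegree ≤ t + 1) → s ≤ t

/-- Formal Stieltjes series `S(u)(z) = -∑ (u)_n z^{-n-1}`, as a formal Laurent
series in the variable `T = z⁻¹`. -/
def Sf (u : PForm) : LaurentSeries ℂ :=
  HahnSeries.ofPowerSeries ℤ ℂ (PowerSeries.mk fun n => if n = 0 then 0 else -u (X ^ (n - 1)))

/-- A polynomial `f(z)`, viewed as a formal Laurent series in `T = z⁻¹`. -/
def toLS (f : Polynomial ℂ) : LaurentSeries ℂ :=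
  ∑ j ∈ Finset.range (f.natDegree + 1), HahnSeries.single (-(j : ℤ)) (f.coeff j)

/-- The Laurent series `z` (in the variable `T = z⁻¹`). -/
def zLS : LaurentSeries ℂ := HahnSeries.single (-1 : ℤ) 1

/-- `(h_a F)(z) = F(az)` on formal Laurent series in `T = z⁻¹`. -/
def hLS (a : ℂ) (F : LaurentSeries ℂ) : LaurentSeries ℂ where
  coeff := fun k => a ^ (-k) * F.coeff k
  isPWO_support' := F.isPWO_support'.mono fun k hk => by
    simp only [Function.mem_support] at hk ⊢
    exact fun h => hk (by rw [h, mul_zero])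

/-- `(H_q F)(z) = (F(qz) - F(z))/((q-1)z)` on formal Laurent series in `T = z⁻¹`. -/
def HqLS (q : ℂ) (F : LaurentSeries ℂ) : LaurentSeries ℂ :=
  HahnSeries.single (1 : ℤ) ((q - 1)⁻¹) * (hLS q F - F)


section Helpers

variable (q : ℂ)

lemma hP_X_pow (k : ℕ) : hP q (X ^ k) = C (q ^ k) * X ^ k := by
  show (Polynomial.aeval (C q * X : Polynomial ℂ)) (X ^ k) = _
  rw [map_pow, aeval_X, mul_pow, ← C_pow]

lemma thetaP_apply (f : Polynomial ℂ) : thetaP 0 f = (f - C (f.eval 0)) /ₘ (X - C 0) := rfl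

lemma thetaP_zero_C (b : ℂ) : thetaP 0 (C b) = 0 := by
  rw [thetaP_apply]
  simp

lemma thetaP_zero_C_mul_X_pow (b : ℂ) (k : ℕ) :
    thetaP 0 (C b * X ^ (k + 1)) = C b * X ^ k := by
  rw [thetaP_apply]
  have h : C b * X ^ (k+1) - C ((C b * X ^ (k+1)).eval 0) = (X - C 0) * (C b * X ^ k) := by
    simp only [eval_mul, eval_C, eval_pow, eval_X, zero_pow (Nat.succ_ne_zero k), mul_zero, C_0,
      sub_zero]
    ring
  rw [h, Polynomial.mul_divByMonic_cancel_left _ (monic_X_sub_C 0)]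

lemma HqP_one : HqP q 1 = 0 := by
  simp only [HqP, LinearMap.smul_apply, LinearMap.comp_apply, LinearMap.sub_apply,
    LinearMap.id_apply]
  rw [show (hP q) (1 : Polynomial ℂ) = 1 by simp [hP]]
  simp [thetaP_zero_C]

lemma HqP_X_pow (k : ℕ) : HqP q (X ^ (k + 1)) = C ((q ^ (k+1) - 1) / (q - 1)) * X ^ k := by
  simp only [HqP, LinearMap.smul_apply, LinearMap.comp_apply, LinearMap.sub_apply,
    LinearMap.id_apply, hP_X_pow]
  have h1 : C (q ^ (k+1)) * X ^ (k+1) - X ^ (k+1) = C (q ^ (k+1) - 1) * X ^ (k+1) := by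
    rw [C_sub, sub_mul, C_1, one_mul]
  rw [h1, thetaP_zero_C_mul_X_pow, Polynomial.smul_eq_C_mul, ← mul_assoc, ← C_mul,
    div_eq_inv_mul]

end Helpers

section Helpers2

variable (q : ℂ) (u w : PForm)

lemma hF_X_pow (k : ℕ) : hF q u (X ^ k) = q ^ k * u (X ^ k) := by
  rw [hF, LinearMap.comp_apply, hP_X_pow, ← Polynomial.smul_eq_C_mul, map_smul, smul_eq_mul]

lemma lmul_X_pow (j : ℕ) : lmul w (X ^ j) = kern w j := by
  show (X ^ j : Polynomial ℂ).sum (fun j a => a • kern w j) = kern w j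
  rw [X_pow_eq_monomial, Polynomial.sum_monomial_index _ _ (zero_smul ℂ _), one_smul]

lemma cF_X_pow (j : ℕ) :
    cF u w (X ^ j) = ∑ i ∈ Finset.range (j + 1), w (X ^ (j - i)) * u (X ^ i) := by
  rw [cF, LinearMap.comp_apply, lmul_X_pow, kern, map_sum]
  refine Finset.sum_congr rfl fun i _ => ?_
  rw [← Polynomial.smul_eq_C_mul, map_smul, smul_eq_mul]

lemma mF_apply (g : Polynomial ℂ) (f : Polynomial ℂ) : mF g u f = u (g * f) := rfl

lemma HqF_apply (f : Polynomial ℂ) : HqF q u f = -(u (HqP q f)) := rfl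

lemma divF_apply (f : Polynomial ℂ) : divF 0 u f = u (thetaP 0 f) := rfl

end Helpers2

section MomentEq

lemma E_zero (q c b1 b0 p f0 : ℂ) (u : PForm) (hu1 : u 1 = 1)
    (heq : LHeq q u (C p * X + C f0) (C c) (C b1 * X + C b0)) :
    c + b1 = 0 := by
  have h := LinearMap.congr_fun heq 1
  simp only [LinearMap.add_apply, LinearMap.zero_apply, HqF_apply, mF_apply, divF_apply] at h
  rw [HqP_one] at h
  have h1 : (C p * X + C f0) * 0 = 0 := by ring
  have h2 : (C c) * 1 = c • (1 : Polynomial ℂ) := by simp [Polynomial.smul_eq_C_mul]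
  have h3 : (C b1 * X + C b0) * 1 = C b1 * X ^ (0 + 1) + C b0 := by ring
  have h5 : (C b1 : Polynomial ℂ) * X ^ 0 = b1 • (1 : Polynomial ℂ) := by
    simp [Polynomial.smul_eq_C_mul]
  rw [h1, map_zero, neg_zero, h2, map_smul, h3, map_add, thetaP_zero_C_mul_X_pow,
    thetaP_zero_C, add_zero, h5, map_smul] at h
  have h4 : cF u (hF q u) 1 = 1 := by
    have h6 := cF_X_pow u (hF q u) 0
    rw [pow_zero] at h6
    have h7 : hF q u 1 = 1 := by
      rw [hF, LinearMap.comp_apply]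
      rw [show (hP q) (1 : Polynomial ℂ) = 1 by simp [hP]]
      exact hu1
    rw [h6]
    simp [h7, hu1]
  rw [h4] at h
  simp only [smul_eq_mul, hu1, mul_one] at h
  linear_combination h

lemma E_succ (q c b1 b0 p f0 : ℂ) (u : PForm)
    (heq : LHeq q u (C p * X + C f0) (C c) (C b1 * X + C b0)) (n : ℕ) :
    -((q ^ (n+1) - 1) / (q - 1)) * (p * u (X ^ (n+1)) + f0 * u (X ^ n))
      + c * u (X ^ (n+1))
      + (b1 * (∑ i ∈ Finset.range (n + 2), q ^ (n+1-i) * u (X ^ (n+1-i)) * u (X ^ i))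
         + b0 * (∑ i ∈ Finset.range (n + 1), q ^ (n-i) * u (X ^ (n-i)) * u (X ^ i))) = 0 := by
  have h := LinearMap.congr_fun heq (X ^ (n+1))
  simp only [LinearMap.add_apply, LinearMap.zero_apply, HqF_apply, mF_apply, divF_apply] at h
  set r : ℂ := (q ^ (n+1) - 1) / (q - 1) with hr
  rw [HqP_X_pow] at h
  have h1 : (C p * X + C f0) * (C r * X ^ n) = (p * r) • X ^ (n+1) + (f0 * r) • X ^ n := by
    simp only [Polynomial.smul_eq_C_mul, C_mul]
    ring
  have h2 : (C c) * X ^ (n+1) = c • (X ^ (n+1) : Polynomial ℂ) := by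
    simp [Polynomial.smul_eq_C_mul]
  have h3 : (C b1 * X + C b0) * X ^ (n+1) = C b1 * X ^ ((n+1) + 1) + C b0 * X ^ (n + 1) := by
    ring
  rw [h1, map_add, map_smul, map_smul, h2, map_smul, h3, map_add, thetaP_zero_C_mul_X_pow,
    thetaP_zero_C_mul_X_pow, map_add, ← Polynomial.smul_eq_C_mul, ← Polynomial.smul_eq_C_mul,
    map_smul, map_smul, cF_X_pow, cF_X_pow] at h
  simp only [smul_eq_mul, hF_X_pow] at h
  linear_combination h
end MomentEq

private lemma uCX (u : PForm) (a : ℂ) (i : ℕ) : u (C a * X ^ i) = a * u (X ^ i) := by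
  rw [← Polynomial.smul_eq_C_mul, map_smul, smul_eq_mul]

private lemma uCX1 (u : PForm) (a : ℂ) : u (C a * X) = a * u X := by
  have := uCX u a 1
  rwa [pow_one] at this

private lemma uC (u : PForm) (a : ℂ) : u (C a) = a * u 1 := by
  rw [show (C a : Polynomial ℂ) = a • 1 by simp [Polynomial.smul_eq_C_mul], map_smul, smul_eq_mul]

/-- the class of a q-Laguerre–Hahn form is a nonnegative integer:
no normalized regular form satisfies an equation with `deg Φ ≤ 1`, `deg B ≤ 1`
and `Ψ` a nonzero constant. -/
theorem class_nonneg (q : ℂ) (hq0 : q ≠ 0) (hq : ∀ n : ℕ, 1 ≤ n → q ^ n ≠ 1) :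
    ¬ ∃ (u : PForm) (Φ Ψ B : Polynomial ℂ),
      u 1 = 1 ∧ IsRegular u ∧ Φ.Monic ∧ Φ.natDegree ≤ 1 ∧ B.natDegree ≤ 1 ∧
      Ψ ≠ 0 ∧ Ψ.natDegree = 0 ∧ LHeq q u Φ Ψ B := by
  rintro ⟨u, Φ, Ψ, B, hu1, ⟨P, hPmon, hPdeg, hPnz, hPorth⟩, hmon, hΦdeg, hBdeg, hΨne, hΨdeg, heq⟩
  have hq1 : q - 1 ≠ 0 := sub_ne_zero.mpr (by simpa using hq 1 le_rfl)
  have hq2 : q + 1 ≠ 0 := by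
    intro h
    exact hq 2 (by norm_num) (by rw [show q = -1 by linear_combination h]; ring)
  -- coefficients
  set c := Ψ.coeff 0 with hcdef
  have hΨ : Ψ = C c := Polynomial.eq_C_of_natDegree_eq_zero hΨdeg
  have hc : c ≠ 0 := fun h => hΨne (by rw [hΨ, h, C_0])
  set b1 := B.coeff 1 with hb1def
  set b0 := B.coeff 0 with hb0def
  have hB : B = C b1 * X + C b0 := eq_X_add_C_of_natDegree_le_one hBdeg
  set p := Φ.coeff 1 with hpdef
  set f0 := Φ.coeff 0 with hf0def
  have hΦ : Φ = C p * X + C f0 := eq_X_add_C_of_natDegree_le_one hΦdeg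
  have hp : p = 1 ∨ (p = 0 ∧ f0 = 1) := by
    rcases Nat.le_one_iff_eq_zero_or_eq_one.mp hΦdeg with h | h
    · right
      have h1 : Φ = 1 := hmon.natDegree_eq_zero.mp h
      constructor
      · rw [hpdef, h1, Polynomial.coeff_one]; norm_num
      · rw [hf0def, h1, Polynomial.coeff_one]; norm_num
    · left
      have := hmon.coeff_natDegree
      rwa [h] at this
  rw [hΨ, hB, hΦ] at heq
  -- moment equations
  have E0 := E_zero q c b1 b0 p f0 u hu1 heq
  have E1 := E_succ q c b1 b0 p f0 u heq 0
  have E2 := E_succ q c b1 b0 p f0 u heq 1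
  have E3 := E_succ q c b1 b0 p f0 u heq 2
  have E4 := E_succ q c b1 b0 p f0 u heq 3
  simp only [Finset.sum_range_succ, Finset.sum_range_zero] at E1 E2 E3 E4
  norm_num [hu1] at E1 E2 E3 E4
  have hd1 : (q - 1)/(q - 1) = 1 := div_self hq1
  have hd2 : (q^2 - 1)/(q - 1) = q + 1 := by rw [div_eq_iff hq1]; ring
  have hd3 : (q^3 - 1)/(q - 1) = 1 + q + q^2 := by rw [div_eq_iff hq1]; ring
  have hd4 : (q^4 - 1)/(q - 1) = 1 + q + q^2 + q^3 := by rw [div_eq_iff hq1]; ring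
  rw [hd1] at E1
  rw [hd2] at E2
  rw [hd3] at E3
  rw [hd4] at E4
  set m1 := u X with hm1
  set m2 := u (X^2) with hm2
  set m3 := u (X^3) with hm3
  set m4 := u (X^4) with hm4
  -- orthogonality data
  have hP0 : P 0 = 1 := (hPmon 0).natDegree_eq_zero.mp (hPdeg 0)
  have hP1 : P 1 = X + C ((P 1).coeff 0) := by
    have h := eq_X_add_C_of_natDegree_le_one (le_of_eq (hPdeg 1))
    have hl : (P 1).coeff 1 = 1 := by
      have := (hPmon 1).coeff_natDegree
      rwa [hPdeg 1] at this
    rwa [hl, C_1, one_mul] at h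
  set α := (P 1).coeff 0 with hα0
  have hα : m1 + α = 0 := by
    have h := hPorth 1 0 (by norm_num)
    rw [hP0, mul_one, hP1, map_add, uC, hu1] at h
    linear_combination h
  have hD1 : m2 - m1^2 ≠ 0 := by
    intro hD
    apply hPnz 1
    have hexp : P 1 * P 1 = C 1 * X^2 + C (α+α) * X + C (α*α) := by
      rw [hP1]; simp only [C_add, C_mul, C_1]; ring
    rw [hexp, map_add, map_add, uCX, uCX1, uC, hu1]
    linear_combination hD + (m1 + α)*hα
  have hP2e : ∃ γ δ : ℂ, P 2 = X^2 + (C γ * X + C δ) := by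
    have hle : (P 2 - X^2).natDegree ≤ 1 := by
      rw [Polynomial.natDegree_le_iff_coeff_eq_zero]
      intro N hN
      rw [Polynomial.coeff_sub, Polynomial.coeff_X_pow]
      rcases eq_or_lt_of_le (show 2 ≤ N from hN) with h2 | h2
      · have hl : (P 2).coeff 2 = 1 := by
          have := (hPmon 2).coeff_natDegree
          rwa [hPdeg 2] at this
        rw [← h2, hl, if_pos rfl]
        ring
      · have hz : (P 2).coeff N = 0 :=
          Polynomial.coeff_eq_zero_of_natDegree_lt (by rw [hPdeg 2]; exact h2)
        rw [hz, if_neg (by omega)]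
        ring
    obtain ⟨γ, δ, h⟩ := exists_eq_X_add_C_of_natDegree_le_one hle
    exact ⟨γ, δ, by rw [← h]; ring⟩
  obtain ⟨γ, δ, hP2⟩ := hP2e
  have he1 : m2 + γ*m1 + δ = 0 := by
    have h := hPorth 2 0 (by norm_num)
    rw [hP0, mul_one, hP2, map_add, map_add, uCX1, uC, hu1] at h
    linear_combination h
  have he2 : m3 + γ*m2 + δ*m1 = 0 := by
    have h := hPorth 2 1 (by norm_num)
    have hexp : P 2 * P 1 = C 1 * X^3 + C (γ+α) * X^2 + C (δ+γ*α) * X + C (δ*α) := by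
      rw [hP2, hP1]; simp only [C_add, C_mul, C_1]; ring
    rw [hexp, map_add, map_add, map_add, uCX, uCX, uCX1, uC, hu1] at h
    linear_combination h - α*he1
  have he3 : m4 + γ*m3 + δ*m2 ≠ 0 := by
    intro hzero
    apply hPnz 2
    have hexp : P 2 * P 2 = C 1 * X^4 + C (γ+γ) * X^3 + C (γ*γ+δ+δ) * X^2
        + C (γ*δ+γ*δ) * X + C (δ*δ) := by
      rw [hP2]; simp only [C_add, C_mul, C_1]; ring
    rw [hexp, map_add, map_add, map_add, map_add, uCX, uCX, uCX, uCX1, uC, hu1]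
    linear_combination hzero + γ*he2 + δ*he1
  -- main case split
  by_cases hcase : (q+1)*p + c*q^2 = 0
  · -- degenerate case
    have hp1 : p = 1 := by
      rcases hp with h | ⟨h0, _⟩
      · exact h
      · exfalso
        apply hc
        have h2 : c*q^2 = 0 := by rw [h0] at hcase; linear_combination hcase
        rcases mul_eq_zero.mp h2 with h | h
        · exact h
        · exact absurd h (pow_ne_zero 2 hq0)
    rw [hp1] at hcase E1 E3 E4
    have hcB : c*q^2 + (q+1) = 0 := by linear_combination hcase
    have hb0e : q*b0 - q*f0 + m1 = 0 := by
      linear_combination q*E1 - q*(q+1)*m1*E0 + m1*hcB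
    have hm3e : q^2*m3 = q^2*(q*f0*(m1^2-m2)+2*m1*m2-m1^3) := by
      linear_combination (-(q^2))*E3 + (q^2*((q^3+1)*m3+(q^2+q)*m1*m2))*E0
        + (m3 - ((q^3+1)*m3+(q^2+q)*m1*m2))*hcB + (q*((q^2+1)*m2+q*m1^2))*hb0e
    have hm3v : m3 = q*f0*(m1^2-m2)+2*m1*m2-m1^3 :=
      mul_left_cancel₀ (pow_ne_zero 2 hq0) hm3e
    have hm4e : (q^2*(1+q))*m4 = (q^2*(1+q))*(m2^2+(m1-q*f0)*(m3-m1*m2)) := by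
      linear_combination (-(q^2))*E4 + (q^2*((q^4+1)*m4+(q^3+q)*m1*m3+q^2*m2^2))*E0
        + (m4 - ((q^4+1)*m4+(q^3+q)*m1*m3+q^2*m2^2))*hcB
        + (q*((q^3+1)*m3+(q^2+q)*m1*m2))*hb0e
    have hm4v : m4 = m2^2+(m1-q*f0)*(m3-m1*m2) :=
      mul_left_cancel₀ (mul_ne_zero (pow_ne_zero 2 hq0) (by rwa [add_comm] at hq2)) hm4e
    have hS7 : (m1^2 - m2) * (m4 + γ*m3 + δ*m2)
        = (m1^2-m2)*(m4-m2^2) + (m3-m1*m2)^2 := by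
      linear_combination (m3-m1*m2)*(m1*he1 - he2) + m2*(m1^2-m2)*he1
    have hz : (m1^2-m2)*(m4-m2^2) + (m3-m1*m2)^2 = 0 := by
      rw [hm4v, hm3v]; ring
    have hfin : (m1^2 - m2) * (m4 + γ*m3 + δ*m2) = 0 := by rw [hS7, hz]
    rcases mul_eq_zero.mp hfin with h | h
    · exact hD1 (by linear_combination -h)
    · exact he3 h
  · -- generic case
    have hA : (m2 - m1^2)*((q+1)*p + c*q^2) = 0 := by
      linear_combination (-1)*E2 + (q+1)*m1*E1 + ((q^2+1)*m2 + q*m1^2 - (q+1)^2*m1^2)*E0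
    exact hD1 ((mul_eq_zero.mp hA).resolve_right hcase)

end QLH

end
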